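/- The morphism Φ = (Φ₁, Φ₂) : (N ⊗ N →^Id N ⊗ N, [−,−], [−,−]) → (M →^∂ N, ·, {−,−}), with Φ₁(n ⊗ n') = {n,n'} and Φ₂(n ⊗ n') = [n,n'], is a central extension of braided crossed modules of Lie K-algebras if and only if (M →^∂ N, ·, {−,−}) is perfect. -/

import Mathlib

universe u

/-- The Lie bracket as a bilinear map. -/
def bracketMap (K : Type u) [CommRing K] (M : Type u) [LieRing M] [LieAlgebra K M] :
    M →ₗ[K] M →ₗ[K] M :=
  LinearMap.mk₂ K (fun a b => ⁅a, b⁆) add_lie smul_lie lie_add lie_smul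

/-- Axioms for a crossed module of Lie `K`-algebras `(d : M → N, act)`. -/
structure LieXMod (K : Type u) [CommRing K] (M N : Type u)
    [LieRing M] [LieAlgebra K M] [LieRing N] [LieAlgebra K N]
    (d : M →ₗ⁅K⁆ N) (act : N →ₗ[K] M →ₗ[K] M) : Prop where
  act_lie : ∀ n n' m, act ⁅n, n'⁆ m = act n (act n' m) - act n' (act n m)
  lie_act : ∀ n m m', act n ⁅m, m'⁆ = ⁅act n m, m'⁆ + ⁅m, act n m'⁆
  equivar : ∀ n m, d (act n m) = ⁅n, d m⁆
  peiffer : ∀ m m', act (d m) m' = ⁅m, m'⁆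

/-- Axioms `BLie1`–`BLie6` for a braiding on a crossed module of Lie algebras. -/
structure LieBraiding (K : Type u) [CommRing K] (M N : Type u)
    [LieRing M] [LieAlgebra K M] [LieRing N] [LieAlgebra K N]
    (d : M →ₗ⁅K⁆ N) (act : N →ₗ[K] M →ₗ[K] M)
    (br : N →ₗ[K] N →ₗ[K] M) : Prop where
  b1 : ∀ n n', d (br n n') = ⁅n, n'⁆
  b2 : ∀ m m', br (d m) (d m') = ⁅m, m'⁆
  b3 : ∀ m n, br (d m) n = - act n m
  b4 : ∀ n m, br n (d m) = act n m
  b5 : ∀ n n' n'', br n ⁅n', n''⁆ = br ⁅n, n'⁆ n'' - br ⁅n, n''⁆ n'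
  b6 : ∀ n n' n'', br ⁅n, n'⁆ n'' = br n ⁅n', n''⁆ - br n' ⁅n, n''⁆

/-- `T`, together with the bilinear pairing `t`, is the non-abelian tensor product
of the Lie algebras `A` and `B` acting on each other via `actAB` and `actBA`:
it satisfies the defining relations of the presentation and the universal property. -/
structure IsNATensor (K : Type u) [CommRing K] (A B : Type u)
    [LieRing A] [LieAlgebra K A] [LieRing B] [LieAlgebra K B]
    (actAB : A →ₗ[K] B →ₗ[K] B) (actBA : B →ₗ[K] A →ₗ[K] A)
    (T : Type u) [LieRing T] [LieAlgebra K T]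
    (t : A →ₗ[K] B →ₗ[K] T) : Prop where
  rel3a : ∀ a a' b, t ⁅a, a'⁆ b = t a (actAB a' b) - t a' (actAB a b)
  rel3b : ∀ a b b', t a ⁅b, b'⁆ = t (actBA b' a) b - t (actBA b a) b'
  rel4 : ∀ a b a' b', ⁅t a b, t a' b'⁆ = - t (actBA b a) (actAB a' b')
  lift : ∀ (C : Type u) [LieRing C] [LieAlgebra K C] (f : A →ₗ[K] B →ₗ[K] C),
      (∀ a a' b, f ⁅a, a'⁆ b = f a (actAB a' b) - f a' (actAB a b)) →
      (∀ a b b', f a ⁅b, b'⁆ = f (actBA b' a) b - f (actBA b a) b') →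
      (∀ a b a' b', ⁅f a b, f a' b'⁆ = - f (actBA b a) (actAB a' b')) →
      ∃! φ : T →ₗ⁅K⁆ C, ∀ a b, φ (t a b) = f a b

/-- `T` with pairing `t` is the non-abelian tensor square of `N` (adjoint actions). -/
def IsNATensorSq (K : Type u) [CommRing K] (N : Type u) [LieRing N] [LieAlgebra K N]
    (T : Type u) [LieRing T] [LieAlgebra K T] (t : N →ₗ[K] N →ₗ[K] T) : Prop :=
  IsNATensor K N N (bracketMap K N) (bracketMap K N) T t


theorem Phi_central_extension_iff_perfect (K : Type u) [CommRing K] (M N : Type u) [LieRing M] [LieAlgebra K M]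
    [LieRing N] [LieAlgebra K N] (d : M →ₗ⁅K⁆ N) (act : N →ₗ[K] M →ₗ[K] M)
    (br : N →ₗ[K] N →ₗ[K] M) (hX : LieXMod K M N d act)
    (hB : LieBraiding K M N d act br)
    (T : Type u) [LieRing T] [LieAlgebra K T] (t : N →ₗ[K] N →ₗ[K] T)
    (hT : IsNATensorSq K N T t) (Φ₁ : T →ₗ⁅K⁆ M) (Φ₂ : T →ₗ⁅K⁆ N)
    (hΦ₁ : ∀ n n' : N, Φ₁ (t n n') = br n n')
    (hΦ₂ : ∀ n n' : N, Φ₂ (t n n') = ⁅n, n'⁆) :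
    (Function.Surjective Φ₁ ∧ Function.Surjective Φ₂ ∧
        (∀ x : T, Φ₁ x = 0 → ∀ y : T, ⁅y, x⁆ = 0) ∧
        (∀ x : T, Φ₂ x = 0 → ∀ y : T, ⁅x, y⁆ = 0 ∧ ⁅y, x⁆ = 0)) ↔
      (LieSubalgebra.lieSpan K M {x : M | ∃ n n' : N, x = br n n'} = ⊤ ∧
      LieSubalgebra.lieSpan K N {x : N | ∃ a b : N, x = ⁅a, b⁆} = ⊤) := by
  obtain ⟨rel3a, rel3b, rel4, lift⟩ := hT
  have hbm : ∀ a b : N, bracketMap K N a b = ⁅a, b⁆ := fun _ _ => rfl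
  -- The generators
  set gens : Set T := {x : T | ∃ a b : N, x = t a b} with hgens
  -- bracket of two generators is a generator
  have hbr_gen : ∀ a b a' b' : N, ⁅t a b, t a' b'⁆ = t ⁅a, b⁆ ⁅a', b'⁆ := by
    intro a b a' b'
    rw [rel4, hbm, hbm]
    have : (⁅b, a⁆ : N) = -⁅a, b⁆ := by rw [← lie_skew]
    rw [this, map_neg, LinearMap.neg_apply, neg_neg]
  -- the span of generators is a Lie subalgebra
  have hSlie : ∀ x ∈ Submodule.span K gens, ∀ y ∈ Submodule.span K gens,
      ⁅x, y⁆ ∈ Submodule.span K gens := by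
    intro x hx y hy
    induction hx, hy using Submodule.span_induction₂ with
    | mem_mem u v hu hv =>
      obtain ⟨a, b, rfl⟩ := hu
      obtain ⟨a', b', rfl⟩ := hv
      rw [hbr_gen]
      exact Submodule.subset_span ⟨_, _, rfl⟩
    | zero_left v hv => simpa using Submodule.zero_mem _
    | zero_right u hu => simpa using Submodule.zero_mem _
    | add_left u v w hu hv hw h1 h2 => rw [add_lie]; exact Submodule.add_mem _ h1 h2
    | add_right u v w hu hv hw h1 h2 => rw [lie_add]; exact Submodule.add_mem _ h1 h2
    | smul_left r u v hu hv h => rw [smul_lie]; exact Submodule.smul_mem _ _ h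
    | smul_right r u v hu hv h => rw [lie_smul]; exact Submodule.smul_mem _ _ h
  set S : LieSubalgebra K T :=
    { Submodule.span K gens with
      lie_mem' := fun {x y} hx hy => hSlie x hx y hy } with hSdef
  have hmemS : ∀ x : T, x ∈ S ↔ x ∈ Submodule.span K gens := fun x => Iff.rfl
  -- every element of T lies in the span of the generators
  have hgen : ∀ x : T, x ∈ Submodule.span K gens := by
    have hmem : ∀ a b : N, t a b ∈ S := fun a b =>
      Submodule.subset_span ⟨a, b, rfl⟩
    set f : N →ₗ[K] N →ₗ[K] S :=
      LinearMap.mk₂ K (fun a b => ⟨t a b, hmem a b⟩)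
        (fun a a' b => Subtype.ext (by simp; try rfl))
        (fun c a b => Subtype.ext (by simp; try rfl))
        (fun a b b' => Subtype.ext (by simp; try rfl))
        (fun c a b => Subtype.ext (by simp; try rfl)) with hf
    have hfval : ∀ a b, (f a b : T) = t a b := fun a b => rfl
    obtain ⟨φ, hφ, -⟩ := lift S f
      (fun a a' b => Subtype.ext (by
        rw [AddSubgroupClass.coe_sub]; exact rel3a a a' b))
      (fun a b b' => Subtype.ext (by
        rw [AddSubgroupClass.coe_sub]; exact rel3b a b b'))
      (fun a b a' b' => Subtype.ext (by
        rw [LieSubalgebra.coe_bracket, NegMemClass.coe_neg]; exact rel4 a b a' b'))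
    obtain ⟨ψ, hψ, huniq⟩ := lift T t rel3a rel3b rel4
    have h1 : S.incl.comp φ = ψ := huniq _ (fun a b => by
      show ((φ ((t a) b) : S) : T) = (t a) b
      rw [hφ]
      exact hfval a b)
    have h2 : (LieHom.id : T →ₗ⁅K⁆ T) = ψ := huniq _ (fun a b => rfl)
    intro x
    have h3 : S.incl.comp φ = (LieHom.id : T →ₗ⁅K⁆ T) := h1.trans h2.symm
    have hx : S.incl (φ x) = x := congrArg (fun g : T →ₗ⁅K⁆ T => g x) h3
    rw [← hx]
    exact (φ x).2
  -- d ∘ Φ₁ = Φ₂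
  have hdΦ : ∀ x : T, d (Φ₁ x) = Φ₂ x := by
    intro x
    induction hgen x using Submodule.span_induction with
    | mem u hu => obtain ⟨a, b, rfl⟩ := hu; rw [hΦ₁, hΦ₂, hB.b1]
    | zero => simp
    | add u v hu hv h1 h2 => simp [h1, h2]
    | smul r u hu h => simp [h]
  -- the bracket formula
  have key : ∀ x y : T, ⁅x, y⁆ = t (Φ₂ x) (Φ₂ y) := by
    intro x y
    induction hgen x, hgen y using Submodule.span_induction₂ with
    | mem_mem u v hu hv =>
      obtain ⟨a, b, rfl⟩ := hu
      obtain ⟨a', b', rfl⟩ := hv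
      rw [hbr_gen, hΦ₂, hΦ₂]
    | zero_left v hv => simp
    | zero_right u hu => simp
    | add_left u v w hu hv hw h1 h2 => simp [add_lie, h1, h2]
    | add_right u v w hu hv hw h1 h2 => simp [lie_add, h1, h2]
    | smul_left r u v hu hv h => simp [smul_lie, h]
    | smul_right r u v hu hv h => simp [lie_smul, h]
  constructor
  · rintro ⟨s1, s2, -, -⟩
    constructor
    · rw [eq_top_iff]
      rintro m -
      obtain ⟨x, rfl⟩ := s1 m
      induction hgen x using Submodule.span_induction with
      | mem u hu =>
        obtain ⟨a, b, rfl⟩ := hu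
        rw [hΦ₁]
        exact LieSubalgebra.subset_lieSpan ⟨a, b, rfl⟩
      | zero => rw [map_zero Φ₁]; exact zero_mem _
      | add u v hu hv h1 h2 => rw [map_add]; exact add_mem h1 h2
      | smul r u hu h => rw [map_smul]; exact LieSubalgebra.smul_mem _ r h
    · rw [eq_top_iff]
      rintro n -
      obtain ⟨x, rfl⟩ := s2 n
      induction hgen x using Submodule.span_induction with
      | mem u hu =>
        obtain ⟨a, b, rfl⟩ := hu
        rw [hΦ₂]
        exact LieSubalgebra.subset_lieSpan ⟨a, b, rfl⟩
      | zero => rw [map_zero Φ₂]; exact zero_mem _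
      | add u v hu hv h1 h2 => rw [map_add]; exact add_mem h1 h2
      | smul r u hu h => rw [map_smul]; exact LieSubalgebra.smul_mem _ r h
  · rintro ⟨h1, h2⟩
    refine ⟨?_, ?_, ?_, ?_⟩
    · intro m
      have hle : LieSubalgebra.lieSpan K M {x : M | ∃ n n' : N, x = br n n'} ≤ Φ₁.range :=
        LieSubalgebra.lieSpan_le.mpr (by rintro x ⟨n, n', rfl⟩; exact ⟨t n n', hΦ₁ n n'⟩)
      exact (Φ₁.mem_range m).mp (hle (h1.symm ▸ LieSubalgebra.mem_top m))
    · intro n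
      have hle : LieSubalgebra.lieSpan K N {x : N | ∃ a b : N, x = ⁅a, b⁆} ≤ Φ₂.range :=
        LieSubalgebra.lieSpan_le.mpr (by rintro x ⟨a, b, rfl⟩; exact ⟨t a b, hΦ₂ a b⟩)
      exact (Φ₂.mem_range n).mp (hle (h2.symm ▸ LieSubalgebra.mem_top n))
    · intro x hx y
      rw [key y x, ← hdΦ x, hx, map_zero d, (t (Φ₂ y)).map_zero]
    · intro x hx y
      constructor
      · rw [key x y, hx, t.map_zero, LinearMap.zero_apply]
      · rw [key y x, hx, (t (Φ₂ y)).map_zero]
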